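/- The Berezin transform is given by the explicit formula: for every f : Fin n × Fin n → ℂ, if h : Fin n × Fin n → ℂ is defined by h (k,l) = Σ_{k',l'} (u k l' * u k' l) / (u k l * u k' l') * f (k',l') * |u k' l'|², then C_u h = D_u f. -/

import Mathlib

open Finset Matrix

/-- The symbol-to-operator map `C_u`. -/
noncomputable def Cmap {ι : Type*} [Fintype ι] (u : Matrix ι ι ℂ) (f : ι × ι → ℂ) :
    Matrix ι ι ℂ :=
  fun k k' => ∑ l, u k l * f (k, l) * (starRingEnd ℂ) (u k' l)

/-- The symbol-to-operator map `D_u`. -/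
noncomputable def Dmap {ι : Type*} [Fintype ι] (u : Matrix ι ι ℂ) (f : ι × ι → ℂ) :
    Matrix ι ι ℂ :=
  fun k k' => ∑ l, u k l * f (k', l) * (starRingEnd ℂ) (u k' l)

/-- the explicit formula for the Berezin transform `I_u`: the function
`h (k,l) = Σ_{k',l'} (u k l' * u k' l)/(u k l * u k' l') * f (k',l') * |u k' l'|²`
satisfies `C_u h = D_u f`, i.e. `h = I_u f`. -/
theorem stmt7 (n : ℕ) (hn : 1 ≤ n) (u : Matrix (Fin n) (Fin n) ℂ)
    (hu : u * uᴴ = 1) (hne : ∀ k l, u k l ≠ 0) (f h : Fin n × Fin n → ℂ)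
    (hh : ∀ p : Fin n × Fin n, h p =
      ∑ k', ∑ l', (u p.1 l' * u k' p.2) / (u p.1 p.2 * u k' l') * f (k', l') *
        ((‖u k' l'‖) ^ 2 : ℝ)) :
    Cmap u h = Dmap u f := by
  have huu : ∀ a b : Fin n, (∑ l, u a l * (starRingEnd ℂ) (u b l)) = if a = b then 1 else 0 := by
    intro a b
    have := congrFun (congrFun hu a) b
    simpa [Matrix.mul_apply, Matrix.one_apply, Matrix.conjTranspose_apply] using this
  funext k k'
  unfold Cmap Dmap
  calc ∑ l, u k l * h (k, l) * (starRingEnd ℂ) (u k' l)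
      = ∑ l, ∑ k'', ∑ l', u k l' * f (k'', l') * ((‖u k'' l'‖)^2 : ℝ)
          / (u k'' l') * (u k'' l * (starRingEnd ℂ) (u k' l)) := by
        refine Finset.sum_congr rfl fun l _ => ?_
        rw [hh]
        simp only [Finset.mul_sum, Finset.sum_mul]
        refine Finset.sum_congr rfl fun k'' _ => Finset.sum_congr rfl fun l' _ => ?_
        field_simp [hne k l, hne k'' l']
    _ = ∑ k'', ∑ l', u k l' * f (k'', l') * ((‖u k'' l'‖)^2 : ℝ)
          / (u k'' l') * (∑ l, u k'' l * (starRingEnd ℂ) (u k' l)) := by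
        rw [Finset.sum_comm]
        refine Finset.sum_congr rfl fun k'' _ => ?_
        rw [Finset.sum_comm]
        refine Finset.sum_congr rfl fun l' _ => ?_
        rw [Finset.mul_sum]
    _ = ∑ l', u k l' * f (k', l') * ((‖u k' l'‖)^2 : ℝ) / (u k' l') := by
        simp only [huu, mul_ite, mul_one, mul_zero]
        rw [Finset.sum_comm]
        simp
    _ = ∑ l, u k l * f (k', l) * (starRingEnd ℂ) (u k' l) := by
        refine Finset.sum_congr rfl fun l _ => ?_
        rw [Complex.sq_norm, ← Complex.normSq_conj, Complex.normSq_eq_conj_mul_self,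
          Complex.conj_conj]
        have := hne k' l
        field_simp
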